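/- Let U → X → Y1 → Y2 be a Markov chain of {0,1}-valued random variables with Y1 = X ⊕ Ψ1, Y2 = Y1 ⊕ Ψ̃2, where Ψ1 ~ Bern(p1), Ψ̃2 ~ Bern(p̃2) are independent of everything else, 0 < p1, p̃2 < 1/2, p2 := p1 ∗ p̃2, and E[X] = α. Then there exists τ ∈ [0, α] such that I(X;Y1|U) ≤ h_b(τ ∗ p1) − h_b(p1) and I(U;Y2) ≤ h_b(α ∗ p2) − h_b(τ ∗ p2). -/

import Mathlib

open Finset

/-- Binary entropy function (natural logarithm). -/
noncomputable def binEnt (q : ℝ) : ℝ := -q * Real.log q - (1 - q) * Real.log (1 - q)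

/-- Binary convolution `a ∗ b = a(1-b) + b(1-a)`. -/
def bconv (a b : ℝ) : ℝ := a * (1 - b) + b * (1 - a)

/-- Mutual information `I(P, W)` of an input distribution `P` through the channel `W`. -/
noncomputable def mutInfo {X Z : Type*} [Fintype X] [Fintype Z]
    (P : X → ℝ) (W : X → Z → ℝ) : ℝ :=
  ∑ x, ∑ z, P x * W x z * Real.log (W x z / (∑ x', P x' * W x' z))

/-- Conditional mutual information `I(X;Y|U)` for a joint distribution `p` of `(U,X)`
and channel `W`. -/
noncomputable def condMI {U X Z : Type*} [Fintype U] [Fintype X] [Fintype Z]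
    (p : U → X → ℝ) (W : X → Z → ℝ) : ℝ :=
  ∑ u, (∑ x, p u x) * mutInfo (fun x => p u x / ∑ x', p u x') W

/-- Mutual information `I(U;Y)` where `Y` is the output of channel `V` on input `X`
and `p` is the joint distribution of `(U,X)`. -/
noncomputable def miUY {U X Y : Type*} [Fintype U] [Fintype X] [Fintype Y]
    (p : U → X → ℝ) (V : X → Y → ℝ) : ℝ :=
  ∑ u, ∑ y, (∑ x, p u x * V x y) *
    Real.log ((∑ x, p u x * V x y) /
      ((∑ x, p u x) * ∑ u', ∑ x, p u' x * V x y))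

namespace Stmt12
open Real

lemma binEnt_eq (x : ℝ) : binEnt x = Real.binEntropy x := by
  simp [binEnt, Real.binEntropy, Real.log_inv]; ring

lemma bconv_assoc (a b c : ℝ) : bconv (bconv a b) c = bconv a (bconv b c) := by
  unfold bconv; ring

lemma bconv_one_sub (a b : ℝ) : bconv (1 - a) b = 1 - bconv a b := by unfold bconv; ring

lemma bconv_eq (a b : ℝ) : bconv a b = a * (1 - 2*b) + b := by unfold bconv; ring

lemma bconv_mem {a b : ℝ} (ha : a ∈ Set.Icc (0:ℝ) 1) (hb : b ∈ Set.Ioo (0:ℝ) (1/2)) :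
    bconv a b ∈ Set.Icc b (1 - b) := by
  rw [bconv_eq]
  constructor
  · nlinarith [ha.1, hb.1, hb.2]
  · nlinarith [ha.2, hb.1, hb.2]

lemma bconv_le_half {a b : ℝ} (ha : a ≤ 1/2) (hb : b ≤ 1/2) : bconv a b ≤ 1/2 := by
  rw [bconv_eq]; nlinarith

lemma bconv_lt_half {a b : ℝ} (ha : a < 1/2) (hb : 0 < b) (hb' : b < 1/2) :
    bconv a b < 1/2 := by rw [bconv_eq]; nlinarith

lemma bconv_pos {a b : ℝ} (ha : 0 ≤ a) (ha' : a ≤ 1) (hb : 0 < b) (hb' : b < 1) :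
    0 < bconv a b := by
  unfold bconv
  rcases eq_or_lt_of_le ha with h | h
  · simp [← h]; nlinarith
  · have : 0 < a * (1 - b) := mul_pos h (by linarith)
    nlinarith [mul_nonneg hb.le (by linarith : (0:ℝ) ≤ 1 - a)]

noncomputable def Lfun (x : ℝ) : ℝ := Real.log (1 - x) - Real.log x

lemma Lfun_pos {x : ℝ} (h0 : 0 < x) (h1 : x < 1/2) : 0 < Lfun x :=
  sub_pos.2 (Real.log_lt_log h0 (by linarith))

lemma Lfun_nonneg {x : ℝ} (h0 : 0 < x) (h1 : x ≤ 1/2) : 0 ≤ Lfun x :=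
  sub_nonneg.2 (Real.log_le_log h0 (by linarith))

lemma hasDerivAt_Lfun {x : ℝ} (h0 : x ≠ 0) (h1 : (1:ℝ) - x ≠ 0) :
    HasDerivAt Lfun (-(1/((1-x)*x))) x := by
  have d1 : HasDerivAt (fun y : ℝ => (1:ℝ) - y) (-1) x := (hasDerivAt_id x).const_sub 1
  have d2 : HasDerivAt (fun y : ℝ => Real.log (1 - y)) (-1/(1-x)) x := d1.log h1
  have d3 : HasDerivAt Lfun (-1/(1-x) - x⁻¹) x := d2.sub (Real.hasDerivAt_log h0)
  convert d3 using 1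
  field_simp
  ring

noncomputable def gfun (x : ℝ) : ℝ := x * (1 - x) * Lfun x

lemma continuousOn_gfun : ContinuousOn gfun (Set.Icc (0:ℝ) (1/2)) := by
  have : ContinuousOn (fun x : ℝ => (1 - x) * (x * Real.log (1 - x)) - (1 - x) * (x * Real.log x))
      (Set.Icc (0:ℝ) (1/2)) := by
    apply ContinuousOn.sub
    · apply ContinuousOn.mul (by fun_prop)
      apply ContinuousOn.mul (by fun_prop)
      apply ContinuousOn.log (by fun_prop)
      intro x hx
      simp only [Set.mem_Icc] at hx
      intro h; linarith [hx.2]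
    · exact Continuous.continuousOn (by continuity) |>.mul (Real.continuous_mul_log.continuousOn)
      |>.congr (fun x _ => rfl)
  apply this.congr
  intro x _
  unfold gfun Lfun
  ring


lemma hasDerivAt_gfun {x : ℝ} (h0 : x ≠ 0) (h1 : (1:ℝ) - x ≠ 0) :
    HasDerivAt gfun ((1 - 2*x) * Lfun x - 1) x := by
  have d1 : HasDerivAt (fun y : ℝ => y * (1 - y)) (1 - 2*x) x := by
    have := (hasDerivAt_id x).mul ((hasDerivAt_id x).const_sub 1)
    exact this.congr_deriv (by simp only [id_eq]; ring)
  have d2 := d1.mul (hasDerivAt_Lfun h0 h1)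
  refine d2.congr_deriv ?_
  field_simp
  ring

/-- derivative of gfun's derivative is nonpositive on (0,1/2) -/
lemma gderiv_anti : AntitoneOn (fun x : ℝ => (1 - 2*x) * Lfun x - 1) (Set.Ioo (0:ℝ) (1/2)) := by
  have hconv : Convex ℝ (Set.Ioo (0:ℝ) (1/2)) := convex_Ioo _ _
  have hint : interior (Set.Ioo (0:ℝ) (1/2)) = Set.Ioo (0:ℝ) (1/2) := interior_Ioo
  have key : ∀ x ∈ Set.Ioo (0:ℝ) (1/2),
      HasDerivAt (fun x : ℝ => (1 - 2*x) * Lfun x - 1)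
        (-2 * Lfun x + (1 - 2*x) * (-(1/((1-x)*x)))) x := by
    intro x hx
    obtain ⟨hx0, hx2⟩ := hx
    have d1 : HasDerivAt (fun y : ℝ => 1 - 2*y) (-2) x := by
      have := ((hasDerivAt_id x).const_mul (2:ℝ)).const_sub (1:ℝ)
      exact this.congr_deriv (by norm_num)
    have := (d1.mul (hasDerivAt_Lfun (ne_of_gt hx0) (by intro h; linarith))).sub_const 1
    exact this
  apply antitoneOn_of_deriv_nonpos hconv
  · exact fun x hx => ((key x hx).continuousAt).continuousWithinAt
  · rw [hint]; exact fun x hx => ((key x hx)).differentiableAt.differentiableWithinAt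
  · rw [hint]
    intro x hx
    rw [(key x hx).deriv]
    obtain ⟨hx0, hx2⟩ := hx
    have h1 : 0 ≤ Lfun x := Lfun_nonneg hx0 (le_of_lt hx2)
    have h2 : 0 < (1-x)*x := mul_pos (by linarith) hx0
    have h3 : 0 < 1 - 2*x := by linarith
    have : 0 < (1 - 2*x) * (1/((1-x)*x)) := mul_pos h3 (by positivity)
    nlinarith

lemma concave_gfun : ConcaveOn ℝ (Set.Icc (0:ℝ) (1/2)) gfun := by
  apply AntitoneOn.concaveOn_of_deriv (convex_Icc _ _) continuousOn_gfun
  · rw [interior_Icc]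
    exact fun x hx => (hasDerivAt_gfun (ne_of_gt hx.1)
      (by intro h; have := hx.2; norm_num at h ⊢; linarith)).differentiableAt.differentiableWithinAt
  · rw [interior_Icc]
    apply gderiv_anti.congr
    intro x hx
    exact ((hasDerivAt_gfun (ne_of_gt hx.1) (by have := hx.2; intro h; linarith)).deriv).symm

lemma gfun_half : gfun (1/2) = 0 := by unfold gfun Lfun; norm_num

lemma bconv_eq' (a b : ℝ) : bconv a b = (1 - 2*b) * a + (2*b) * (1/2) := by unfold bconv; ring

/-- Key consequence of concavity: `(1-2q) g(s) ≤ g(s∗q)`. -/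
lemma g_conv_ineq {s q : ℝ} (hs : s ∈ Set.Icc (0:ℝ) (1/2)) (hq : q ∈ Set.Icc (0:ℝ) (1/2)) :
    (1 - 2*q) * gfun s ≤ gfun (bconv s q) := by
  have h12 : (1/2 : ℝ) ∈ Set.Icc (0:ℝ) (1/2) := by norm_num
  have := concave_gfun.2 hs h12 (by linarith [hq.2] : (0:ℝ) ≤ 1 - 2*q)
    (by linarith [hq.1] : (0:ℝ) ≤ 2*q) (by ring)
  rw [smul_eq_mul, smul_eq_mul, smul_eq_mul, smul_eq_mul, gfun_half, ← bconv_eq'] at this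
  linarith

lemma bconv_pos' {a b : ℝ} (ha : 0 ≤ a) (hb : 0 < b) (hb' : b < 1/2) : 0 < bconv a b := by
  rw [bconv_eq]; nlinarith

lemma hasDerivAt_bconv (q : ℝ) (x : ℝ) : HasDerivAt (fun s => bconv s q) (1 - 2*q) x := by
  have : HasDerivAt (fun s : ℝ => s * (1 - 2*q) + q) ((1 - 2*q)) x := by
    simpa using ((hasDerivAt_id x).mul_const (1 - 2*q)).add_const q
  exact this.congr_deriv rfl |>.congr_of_eventuallyEq (by filter_upwards with y; rw [bconv_eq])

/-- The slope function `φ(s) = L(s∗q)/L(s)` is monotone on `(0,1/2)`. -/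
lemma phi_mono {q : ℝ} (hq : q ∈ Set.Ioo (0:ℝ) (1/2)) :
    MonotoneOn (fun s => Lfun (bconv s q) / Lfun s) (Set.Ioo (0:ℝ) (1/2)) := by
  obtain ⟨hq0, hq2⟩ := hq
  have key : ∀ x ∈ Set.Ioo (0:ℝ) (1/2),
      HasDerivAt (fun s => Lfun (bconv s q) / Lfun s)
        (((1-2*q) * (-(1/((1 - bconv x q)*(bconv x q)))) * Lfun x -
          Lfun (bconv x q) * (-(1/((1-x)*x)))) / (Lfun x)^2) x := by
    intro x hx
    obtain ⟨hx0, hx2⟩ := hx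
    have hm0 : 0 < bconv x q := bconv_pos' hx0.le hq0 hq2
    have hm2 : bconv x q < 1/2 := bconv_lt_half hx2 hq0 hq2
    have d1 : HasDerivAt (fun s => Lfun (bconv s q)) ((-(1/((1 - bconv x q)*(bconv x q)))) * (1-2*q)) x :=
      HasDerivAt.comp (h₂ := Lfun) x (hasDerivAt_Lfun (ne_of_gt hm0) (by linarith)) (hasDerivAt_bconv q x)
    have d2 := hasDerivAt_Lfun (ne_of_gt hx0) (by linarith : (1:ℝ) - x ≠ 0)
    have := d1.div d2 (ne_of_gt (Lfun_pos hx0 hx2))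
    refine this.congr_deriv ?_
    ring
  apply monotoneOn_of_deriv_nonneg (convex_Ioo _ _)
  · exact fun x hx => (key x hx).continuousAt.continuousWithinAt
  · rw [interior_Ioo]; exact fun x hx => (key x hx).differentiableAt.differentiableWithinAt
  · rw [interior_Ioo]
    intro x hx
    rw [(key x hx).deriv]
    obtain ⟨hx0, hx2⟩ := hx
    have hm0 : 0 < bconv x q := bconv_pos' hx0.le hq0 hq2
    have hm2 : bconv x q < 1/2 := bconv_lt_half hx2 hq0 hq2
    have hL : 0 < Lfun x := Lfun_pos hx0 hx2
    apply div_nonneg _ (by positivity)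
    -- numerator ≥ 0 ⟺ g(s∗q) ≥ (1-2q) g(s)
    have hg := g_conv_ineq (Set.mem_Icc.2 ⟨hx0.le, hx2.le⟩) (Set.mem_Icc.2 ⟨hq0.le, hq2.le⟩)
    unfold gfun at hg
    have hxx : 0 < (1-x)*x := by nlinarith
    have hmm : 0 < (1 - bconv x q) * (bconv x q) := by nlinarith
    have hLm : 0 ≤ Lfun (bconv x q) := Lfun_nonneg hm0 hm2.le
    rw [sub_nonneg]
    rw [show Lfun (bconv x q) * -(1/((1-x)*x)) = -(Lfun (bconv x q) / ((1-x)*x)) from by ring,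
      show (1-2*q) * -(1/((1 - bconv x q)*(bconv x q))) * Lfun x
        = -((1-2*q) * Lfun x / ((1 - bconv x q)*(bconv x q))) from by ring,
      neg_le_neg_iff, div_le_div_iff₀ hmm hxx]
    nlinarith
  done

lemma hasDerivAt_G {q c : ℝ} (hq : q ∈ Set.Ioo (0:ℝ) (1/2)) {x : ℝ}
    (hx : x ∈ Set.Ioo (0:ℝ) (1/2)) :
    HasDerivAt (fun s => binEntropy (bconv s q) - c * binEntropy s)
      ((1 - 2*q) * Lfun (bconv x q) - c * Lfun x) x := by
  obtain ⟨hq0, hq2⟩ := hq; obtain ⟨hx0, hx2⟩ := hx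
  have hm0 : 0 < bconv x q := bconv_pos' hx0.le hq0 hq2
  have hm2 : bconv x q < 1/2 := bconv_lt_half hx2 hq0 hq2
  have d1 : HasDerivAt (fun s => binEntropy (bconv s q))
      ((log (1 - bconv x q) - log (bconv x q)) * (1 - 2*q)) x :=
    HasDerivAt.comp (h₂ := binEntropy) x (Real.hasDerivAt_binEntropy (ne_of_gt hm0) (by intro h; rw [h] at hm2; norm_num at hm2))
      (hasDerivAt_bconv q x)
  have d2 := (Real.hasDerivAt_binEntropy (ne_of_gt hx0)
    (by intro h; rw [h] at hx2; norm_num at hx2)).const_mul c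
  have := d1.sub d2
  refine this.congr_deriv ?_
  unfold Lfun
  ring

lemma continuousOn_G (q c : ℝ) :
    ContinuousOn (fun s => binEntropy (bconv s q) - c * binEntropy s) (Set.Icc (0:ℝ) (1/2)) := by
  apply Continuous.continuousOn
  have : Continuous (fun s : ℝ => bconv s q) := by
    simp only [bconv]; continuity
  exact (Real.binEntropy_continuous.comp this).sub
    (continuous_const.mul Real.binEntropy_continuous)

/-- Tangent-line inequality for Mrs. Gerber's function. -/
lemma tangent {q σ : ℝ} (hq : q ∈ Set.Ioo (0:ℝ) (1/2)) (hσ : σ ∈ Set.Ioo (0:ℝ) (1/2))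
    {s : ℝ} (hs : s ∈ Set.Icc (0:ℝ) (1/2)) :
    binEntropy (bconv σ q) - ((1-2*q) * Lfun (bconv σ q) / Lfun σ) * binEntropy σ ≤
    binEntropy (bconv s q) - ((1-2*q) * Lfun (bconv σ q) / Lfun σ) * binEntropy s := by
  obtain ⟨hq0, hq2⟩ := hq
  obtain ⟨hσ0, hσ2⟩ := hσ
  set c : ℝ := (1-2*q) * Lfun (bconv σ q) / Lfun σ with hc
  set G : ℝ → ℝ := fun s => binEntropy (bconv s q) - c * binEntropy s with hG
  have hLσ : 0 < Lfun σ := Lfun_pos hσ0 hσ2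
  have derivG : ∀ x ∈ Set.Ioo (0:ℝ) (1/2), deriv G x = (1-2*q) * Lfun (bconv x q) - c * Lfun x :=
    fun x hx => (hasDerivAt_G ⟨hq0, hq2⟩ hx).deriv
  have sign : ∀ x ∈ Set.Ioo (0:ℝ) (1/2),
      ((1-2*q) * Lfun (bconv x q) - c * Lfun x)
        = (1-2*q) * Lfun x * (Lfun (bconv x q)/Lfun x - Lfun (bconv σ q)/Lfun σ) := by
    intro x hx
    have hLx : Lfun x ≠ 0 := ne_of_gt (Lfun_pos hx.1 hx.2)
    rw [hc]; field_simp
  -- G is antitone on [0,σ] and monotone on [σ,1/2]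
  have anti : AntitoneOn G (Set.Icc (0:ℝ) σ) := by
    apply antitoneOn_of_deriv_nonpos (convex_Icc _ _)
      ((continuousOn_G q c).mono (Set.Icc_subset_Icc le_rfl hσ2.le))
    · rw [interior_Icc]
      exact fun x hx => (hasDerivAt_G ⟨hq0, hq2⟩ ⟨hx.1, hx.2.trans hσ2⟩).differentiableAt.differentiableWithinAt
    · rw [interior_Icc]
      intro x hx
      have hx' : x ∈ Set.Ioo (0:ℝ) (1/2) := ⟨hx.1, hx.2.trans hσ2⟩
      rw [derivG x hx', sign x hx']
      have h1 : 0 < Lfun x := Lfun_pos hx'.1 hx'.2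
      have h2 : Lfun (bconv x q)/Lfun x ≤ Lfun (bconv σ q)/Lfun σ :=
        phi_mono ⟨hq0, hq2⟩ hx' ⟨hσ0, hσ2⟩ hx.2.le
      have h3 : 0 < 1 - 2*q := by linarith
      nlinarith [mul_nonneg (mul_nonneg h3.le h1.le) (sub_nonneg.2 h2)]
  have mono : MonotoneOn G (Set.Icc σ (1/2)) := by
    apply monotoneOn_of_deriv_nonneg (convex_Icc _ _)
      ((continuousOn_G q c).mono (Set.Icc_subset_Icc hσ0.le le_rfl))
    · rw [interior_Icc]
      exact fun x hx => (hasDerivAt_G ⟨hq0, hq2⟩ ⟨hσ0.trans hx.1, hx.2⟩).differentiableAt.differentiableWithinAt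
    · rw [interior_Icc]
      intro x hx
      have hx' : x ∈ Set.Ioo (0:ℝ) (1/2) := ⟨hσ0.trans hx.1, hx.2⟩
      rw [derivG x hx', sign x hx']
      have h1 : 0 < Lfun x := Lfun_pos hx'.1 hx'.2
      have h2 : Lfun (bconv σ q)/Lfun σ ≤ Lfun (bconv x q)/Lfun x :=
        phi_mono ⟨hq0, hq2⟩ ⟨hσ0, hσ2⟩ hx' hx.1.le
      have h3 : 0 < 1 - 2*q := by linarith
      nlinarith [mul_nonneg (mul_nonneg h3.le h1.le) (sub_nonneg.2 h2)]
  rcases le_total s σ with h | h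
  · exact anti ⟨hs.1, h⟩ ⟨hσ0.le, le_rfl⟩ h
  · exact mono ⟨le_rfl, hσ2.le⟩ ⟨h, hs.2⟩ h

/-- Mrs. Gerber's Lemma, summed form. -/
lemma mgl {ι : Type*} [Fintype ι] (P s : ι → ℝ) {q σ : ℝ}
    (hq : q ∈ Set.Ioo (0:ℝ) (1/2)) (hσ : σ ∈ Set.Ioc (0:ℝ) (1/2))
    (hP : ∀ i, 0 ≤ P i) (hP1 : ∑ i, P i = 1) (hs : ∀ i, s i ∈ Set.Icc (0:ℝ) (1/2))
    (hB : ∑ i, P i * binEntropy (bconv (s i) q) ≤ binEntropy (bconv σ q)) :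
    ∑ i, P i * binEntropy (s i) ≤ binEntropy σ := by
  rcases eq_or_lt_of_le hσ.2 with h2 | h2
  · -- σ = 1/2 : bound by log 2
    rw [h2]
    calc ∑ i, P i * binEntropy (s i) ≤ ∑ i, P i * log 2 := by
          apply Finset.sum_le_sum
          intro i _
          exact mul_le_mul_of_nonneg_left Real.binEntropy_le_log_two (hP i)
      _ = log 2 := by rw [← Finset.sum_mul, hP1, one_mul]
      _ = binEntropy (1/2) := by rw [show (1/2 : ℝ) = 2⁻¹ by norm_num, Real.binEntropy_two_inv]
  · have hσ' : σ ∈ Set.Ioo (0:ℝ) (1/2) := ⟨hσ.1, h2⟩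
    set c : ℝ := (1-2*q) * Lfun (bconv σ q) / Lfun σ with hc
    have hcpos : 0 < c := by
      apply div_pos (mul_pos (by linarith [hq.2]) _) (Lfun_pos hσ.1 h2)
      exact Lfun_pos (bconv_pos' hσ.1.le hq.1 hq.2) (bconv_lt_half h2 hq.1 hq.2)
    have key : ∀ i, binEntropy (bconv σ q) - c * binEntropy σ ≤
        binEntropy (bconv (s i) q) - c * binEntropy (s i) := fun i => tangent hq hσ' (hs i)
    have sum_key : binEntropy (bconv σ q) - c * binEntropy σ ≤
        ∑ i, P i * (binEntropy (bconv (s i) q) - c * binEntropy (s i)) := by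
      calc binEntropy (bconv σ q) - c * binEntropy σ
          = ∑ i, P i * (binEntropy (bconv σ q) - c * binEntropy σ) := by
            rw [← Finset.sum_mul, hP1, one_mul]
        _ ≤ _ := Finset.sum_le_sum (fun i _ => mul_le_mul_of_nonneg_left (key i) (hP i))
    have expand : ∑ i, P i * (binEntropy (bconv (s i) q) - c * binEntropy (s i))
        = (∑ i, P i * binEntropy (bconv (s i) q)) - c * ∑ i, P i * binEntropy (s i) := by
      rw [Finset.mul_sum, ← Finset.sum_sub_distrib]
      congr 1; ext i; ring
    rw [expand] at sum_key
    have := le_trans sum_key (by linarith [hB] : (∑ i, P i * binEntropy (bconv (s i) q)) - c * ∑ i, P i * binEntropy (s i) ≤ binEntropy (bconv σ q) - c * ∑ i, P i * binEntropy (s i))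
    have h4 : c * ∑ i, P i * binEntropy (s i) ≤ c * binEntropy σ := by linarith
    exact le_of_mul_le_mul_left h4 hcpos

/-- mutual information of a binary input through a BSC. -/
lemma mutInfo_bsc {p : ℝ} (hp0 : 0 < p) (hp1 : p < 1) (P : Fin 2 → ℝ)
    (h0 : 0 ≤ P 0) (h1 : 0 ≤ P 1) (hsum : P 0 + P 1 = 1) :
    mutInfo P (fun x y => if x = y then 1 - p else p)
      = binEnt (bconv (P 1) p) - binEnt p := by
  have hP0 : P 0 = 1 - P 1 := by linarith
  have hb : bconv (P 1) p = P 1 + p - 2*(P 1 * p) := by unfold bconv; ring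
  have hP1le : P 1 ≤ 1 := by linarith
  have hQ1 : (0:ℝ) < P 1 + p - 2*(P 1 * p) := by
    rcases eq_or_lt_of_le hP1le with h | h
    · rw [h]; nlinarith
    · nlinarith [mul_nonneg h1 (sub_nonneg.2 hp1.le), mul_pos hp0 (by linarith : (0:ℝ) < 1 - P 1)]
  have hQ0 : (0:ℝ) < 1 - (P 1 + p - 2*(P 1 * p)) := by
    rcases eq_or_lt_of_le h1 with h | h
    · rw [← h]; norm_num; nlinarith
    · nlinarith [mul_pos h hp0, mul_nonneg (by linarith : (0:ℝ) ≤ 1 - P 1) (sub_nonneg.2 hp1.le)]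
  unfold mutInfo
  rw [Fin.sum_univ_two]
  simp only [Fin.sum_univ_two]
  norm_num
  have e0 : P 0 * (1 - p) + P 1 * p = 1 - (P 1 + p - 2*(P 1 * p)) := by rw [hP0]; ring
  have e1 : P 0 * p + P 1 * (1 - p) = P 1 + p - 2*(P 1 * p) := by rw [hP0]; ring
  rw [e0, e1, hb]
  rw [Real.log_div (by linarith) (ne_of_gt hQ0), Real.log_div (ne_of_gt hp0) (ne_of_gt hQ1),
    Real.log_div (ne_of_gt hp0) (ne_of_gt hQ0), Real.log_div (by linarith) (ne_of_gt hQ1)]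
  unfold binEnt
  rw [hP0]
  ring

lemma condMI_eval {U : Type*} [Fintype U] (j : U → Fin 2 → ℝ) (hjnn : ∀ u x, 0 ≤ j u x)
    {p : ℝ} (hp0 : 0 < p) (hp1 : p < 1) :
    condMI j (fun x y => if x = y then 1 - p else p)
      = ∑ u, (∑ x, j u x) * (binEnt (bconv (j u 1 / ∑ x, j u x) p) - binEnt p) := by
  unfold condMI
  apply Finset.sum_congr rfl
  intro u _
  by_cases hS : (∑ x, j u x) = 0
  · rw [hS]; ring
  · have hS2 : ∑ x, j u x = j u 0 + j u 1 := Fin.sum_univ_two _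
    have hSpos : 0 < ∑ x, j u x := lt_of_le_of_ne (Finset.sum_nonneg (fun x _ => hjnn u x)) (Ne.symm hS)
    congr 1
    apply mutInfo_bsc hp0 hp1
    · exact div_nonneg (hjnn u 0) hSpos.le
    · exact div_nonneg (hjnn u 1) hSpos.le
    · rw [← add_div, ← hS2, div_self hS]

lemma miUY_eval {U : Type*} [Fintype U] (j : U → Fin 2 → ℝ) (hjnn : ∀ u x, 0 ≤ j u x)
    (hjsum : ∑ u, ∑ x, j u x = 1) {p : ℝ} (hp0 : 0 < p) (hp1 : p < 1) :
    miUY j (fun x y => if x = y then 1 - p else p)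
      = binEnt (bconv (∑ u, j u 1) p)
        - ∑ u, (∑ x, j u x) * binEnt (bconv (j u 1 / ∑ x, j u x) p) := by
  set α := ∑ u, j u 1 with hαdef
  have hsum2 : ∀ u, (∑ x, j u x) = j u 0 + j u 1 := fun u => Fin.sum_univ_two _
  have hjsum' : ∑ u, (j u 0 + j u 1) = 1 := by
    rw [← Finset.sum_congr rfl (fun u _ => hsum2 u)]; exact hjsum
  have hj0sum : ∑ u, j u 0 = 1 - α := by
    rw [Finset.sum_add_distrib] at hjsum'; rw [hαdef]; linarith
  have hα0 : 0 ≤ α := Finset.sum_nonneg (fun u _ => hjnn u 1)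
  have hα1 : α ≤ 1 := by
    have : 0 ≤ ∑ u, j u 0 := Finset.sum_nonneg (fun u _ => hjnn u 0)
    linarith [hj0sum]
  set Q : ℝ := bconv α p with hQdef
  have hQpos : 0 < Q := bconv_pos hα0 hα1 hp0 hp1
  have hQlt : Q < 1 := by
    have := bconv_pos (by linarith : (0:ℝ) ≤ 1 - α) (by linarith) hp0 hp1
    rw [bconv_one_sub] at this; linarith
  unfold miUY
  simp only [Fin.sum_univ_two]
  norm_num
  have hZ0 : ∑ u : U, (j u 0 * (1 - p) + j u 1 * p) = 1 - Q := by
    rw [Finset.sum_add_distrib, ← Finset.sum_mul, ← Finset.sum_mul, hj0sum, ← hαdef, hQdef]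
    unfold bconv; ring
  have hZ1 : ∑ u : U, (j u 0 * p + j u 1 * (1 - p)) = Q := by
    rw [Finset.sum_add_distrib, ← Finset.sum_mul, ← Finset.sum_mul, hj0sum, ← hαdef, hQdef]
    unfold bconv; ring
  rw [hZ0, hZ1]
  have key : ∀ u : U,
      (j u 0 * (1 - p) + j u 1 * p) *
          Real.log ((j u 0 * (1 - p) + j u 1 * p) / ((j u 0 + j u 1) * (1 - Q))) +
        (j u 0 * p + j u 1 * (1 - p)) *
          Real.log ((j u 0 * p + j u 1 * (1 - p)) / ((j u 0 + j u 1) * Q))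
      = -((j u 0 + j u 1) * binEnt (bconv (j u 1 / (j u 0 + j u 1)) p))
        - ((j u 0 * (1 - p) + j u 1 * p) * Real.log (1 - Q)
           + (j u 0 * p + j u 1 * (1 - p)) * Real.log Q) := by
    intro u
    by_cases hS : j u 0 + j u 1 = 0
    · have h0 : j u 0 = 0 := le_antisymm (by linarith [hjnn u 1]) (hjnn u 0)
      have h1 : j u 1 = 0 := by linarith [hjnn u 0]
      simp [h0, h1]
    · have hSpos : 0 < j u 0 + j u 1 :=
        lt_of_le_of_ne (add_nonneg (hjnn u 0) (hjnn u 1)) (Ne.symm hS)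
      set S := j u 0 + j u 1 with hSdef
      set γ := j u 1 / S with hγ
      set b := bconv γ p with hb
      have hγ0 : 0 ≤ γ := div_nonneg (hjnn u 1) hSpos.le
      have hγ1 : γ ≤ 1 := by rw [hγ, div_le_one hSpos]; linarith [hjnn u 0]
      have hbpos : 0 < b := bconv_pos hγ0 hγ1 hp0 hp1
      have hblt : b < 1 := by
        have := bconv_pos (by linarith : (0:ℝ) ≤ 1 - γ) (by linarith) hp0 hp1
        rw [bconv_one_sub] at this; linarith
      have hR1 : j u 0 * p + j u 1 * (1 - p) = S * b := by
        rw [hb, hγ]; unfold bconv; field_simp; ring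
      have hR0 : j u 0 * (1 - p) + j u 1 * p = S * (1 - b) := by
        rw [hb, hγ]; unfold bconv; field_simp; ring
      rw [hR0, hR1,
        show S * (1 - b) / (S * (1 - Q)) = (1 - b) / (1 - Q) from
          mul_div_mul_left _ _ (ne_of_gt hSpos),
        show S * b / (S * Q) = b / Q from mul_div_mul_left _ _ (ne_of_gt hSpos),
        Real.log_div (by linarith : (1:ℝ) - b ≠ 0) (by intro h; rw [sub_eq_zero] at h; linarith),
        Real.log_div (ne_of_gt hbpos) (ne_of_gt hQpos)]
      unfold binEnt
      ring
  rw [Finset.sum_congr rfl (fun u _ => key u)]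
  rw [Finset.sum_sub_distrib, Finset.sum_add_distrib, Finset.sum_neg_distrib,
    ← Finset.sum_mul, ← Finset.sum_mul, hZ0, hZ1]
  unfold binEnt
  ring

lemma binEntropy_le_of_mem {b x : ℝ} (hb : 0 < b) (hb2 : b ≤ 1/2)
    (hx : x ∈ Set.Icc b (1 - b)) : binEntropy b ≤ binEntropy x := by
  have hmemb : b ∈ Set.Icc (0:ℝ) 2⁻¹ := ⟨hb.le, by norm_num; linarith⟩
  rcases le_total x (1/2) with h | h
  · exact binEntropy_strictMonoOn.monotoneOn hmemb
      ⟨by linarith [hx.1], by norm_num; linarith⟩ hx.1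
  · rw [← Real.binEntropy_one_sub x]
    exact binEntropy_strictMonoOn.monotoneOn hmemb
      ⟨by linarith [hx.2], by norm_num; linarith⟩ (by linarith [hx.2])

lemma fold_mem {x : ℝ} (h0 : 0 ≤ x) (h1 : x ≤ 1) :
    (if x ≤ 1/2 then x else 1 - x) ∈ Set.Icc (0:ℝ) (1/2) := by
  split <;> constructor <;> linarith
lemma fold_ent (x : ℝ) : binEntropy (if x ≤ 1/2 then x else 1 - x) = binEntropy x := by
  split
  · rfl
  · exact Real.binEntropy_one_sub x
lemma fold_conv (x q : ℝ) :
    binEntropy (bconv (if x ≤ 1/2 then x else 1 - x) q) = binEntropy (bconv x q) := by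
  split
  · rfl
  · rw [bconv_one_sub, Real.binEntropy_one_sub]
lemma fold_pos {x b : ℝ} (hb : 0 < b) (h1 : b ≤ x) (h2 : x ≤ 1 - b) :
    0 < (if x ≤ 1/2 then x else 1 - x) := by split <;> linarith


end Stmt12

open Stmt12 Real in
/-- for the degraded binary symmetric broadcast chain
`U → X → Y₁ → Y₂` with `Y₁ = X ⊕ Ψ₁`, `Ψ₁ ~ Bern(p₁)`, `Y₂ = Y₁ ⊕ Ψ̃₂`,
`Ψ̃₂ ~ Bern(p̃₂)`, `p₂ := p₁ ∗ p̃₂`, and `E[X] = α`, there exists `τ ∈ [0,α]` with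
`I(X;Y₁|U) ≤ h_b(τ∗p₁) − h_b(p₁)` and `I(U;Y₂) ≤ h_b(α∗p₂) − h_b(τ∗p₂)`. -/
theorem stmt12 {U : Type*} [Fintype U] [Nonempty U] (p1 pt2 α : ℝ)
    (hp1 : p1 ∈ Set.Ioo (0 : ℝ) (1 / 2)) (hpt2 : pt2 ∈ Set.Ioo (0 : ℝ) (1 / 2))
    (j : U → Fin 2 → ℝ) (hjnn : ∀ u x, 0 ≤ j u x) (hjsum : ∑ u, ∑ x, j u x = 1)
    (hα : ∑ u, j u 1 = α)
    (W1 W2 : Fin 2 → Fin 2 → ℝ)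
    (hW1 : W1 = fun x y => if x = y then 1 - p1 else p1)
    (hW2 : W2 = fun x y => if x = y then 1 - bconv p1 pt2 else bconv p1 pt2) :
    ∃ τ ∈ Set.Icc (0 : ℝ) α,
      condMI j W1 ≤ binEnt (bconv τ p1) - binEnt p1 ∧
      miUY j W2 ≤ binEnt (bconv α (bconv p1 pt2)) - binEnt (bconv τ (bconv p1 pt2)) := by
  obtain ⟨hp10, hp12⟩ := hp1
  obtain ⟨hpt20, hpt22⟩ := hpt2
  set p2 : ℝ := bconv p1 pt2 with hp2def
  have hp20 : 0 < p2 := bconv_pos' hp10.le hpt20 hpt22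
  have hp22 : p2 < 1/2 := bconv_lt_half hp12 hpt20 hpt22
  set P : U → ℝ := fun u => ∑ x, j u x with hPdef
  set γ : U → ℝ := fun u => j u 1 / P u with hγdef
  have hPnn : ∀ u, 0 ≤ P u := fun u => Finset.sum_nonneg (fun x _ => hjnn u x)
  have hP1 : ∑ u, P u = 1 := hjsum
  have hj1P : ∀ u, j u 1 ≤ P u := by
    intro u
    rw [hPdef]
    simp only [Fin.sum_univ_two]
    linarith [hjnn u 0]
  have hγ0 : ∀ u, 0 ≤ γ u := fun u => div_nonneg (hjnn u 1) (hPnn u)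
  have hγ1 : ∀ u, γ u ≤ 1 := by
    intro u
    by_cases h : P u = 0
    · rw [hγdef]; simp [h]
    · rw [hγdef]
      exact div_le_one_of_le₀ (hj1P u) (hPnn u)
  have hPγ : ∀ u, P u * γ u = j u 1 := by
    intro u
    by_cases h : P u = 0
    · have : j u 1 = 0 := le_antisymm (h ▸ hj1P u) (hjnn u 1)
      rw [h, this, zero_mul]
    · rw [hγdef]; field_simp
  have hα0 : 0 ≤ α := hα ▸ Finset.sum_nonneg (fun u _ => hjnn u 1)
  have hα1 : α ≤ 1 := by
    rw [← hα, ← hP1]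
    exact Finset.sum_le_sum (fun u _ => hj1P u)
  have hsumγ : ∑ u, P u * γ u = α := by rw [Finset.sum_congr rfl (fun u _ => hPγ u)]; exact hα
  set B : ℝ := ∑ u, P u * binEntropy (bconv (γ u) p2) with hBdef
  -- lower bound on B
  have hBl : binEntropy p2 ≤ B := by
    calc binEntropy p2 = ∑ u, P u * binEntropy p2 := by rw [← Finset.sum_mul, hP1, one_mul]
      _ ≤ B := Finset.sum_le_sum (fun u _ => mul_le_mul_of_nonneg_left
          (binEntropy_le_of_mem hp20 hp22.le (bconv_mem ⟨hγ0 u, hγ1 u⟩ ⟨hp20, hp22⟩)) (hPnn u))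
  -- upper bound on B (Jensen)
  have hBu : B ≤ binEntropy (bconv α p2) := by
    have hconc : ConcaveOn ℝ (Set.Icc (0:ℝ) 1) binEntropy := strictConcave_binEntropy.concaveOn
    have hmem : ∀ u ∈ Finset.univ (α := U), bconv (γ u) p2 ∈ Set.Icc (0:ℝ) 1 := by
      intro u _
      have := bconv_mem ⟨hγ0 u, hγ1 u⟩ ⟨hp20, hp22⟩
      exact ⟨by linarith [this.1], by linarith [this.2]⟩
    have := hconc.le_map_sum (fun u _ => hPnn u) hP1 hmem
    simp only [smul_eq_mul] at this
    have hctr : ∑ u, P u * bconv (γ u) p2 = bconv α p2 := by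
      have : ∀ u, P u * bconv (γ u) p2 = (1 - 2*p2) * (P u * γ u) + p2 * P u := by
        intro u; rw [bconv_eq]; ring
      rw [Finset.sum_congr rfl (fun u _ => this u), Finset.sum_add_distrib,
        ← Finset.mul_sum, ← Finset.mul_sum, hsumγ, hP1, bconv_eq]
      ring
    rw [hctr] at this
    exact this
  -- IVT to find τ
  have hcont : ContinuousOn (fun t => binEntropy (bconv t p2)) (Set.Icc 0 α) := by
    apply Continuous.continuousOn
    have : Continuous fun t : ℝ => bconv t p2 := by unfold bconv; continuity
    exact Real.binEntropy_continuous.comp this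
  have hIVT := intermediate_value_Icc hα0 hcont
  have hBmem : B ∈ Set.Icc (binEntropy (bconv 0 p2)) (binEntropy (bconv α p2)) := by
    rw [show bconv 0 p2 = p2 from by unfold bconv; ring]
    exact ⟨hBl, hBu⟩
  obtain ⟨τ, hτmem, hτeq⟩ := hIVT hBmem
  have hτeq' : Real.binEntropy (bconv τ p2) = B := hτeq
  refine ⟨τ, hτmem, ?_, ?_⟩
  · -- first inequality via MGL
    have hτ1 : τ ≤ 1 := le_trans hτmem.2 hα1
    have hτb := bconv_mem ⟨hτmem.1, hτ1⟩ ⟨hp10, hp12⟩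
    set σ : ℝ := if bconv τ p1 ≤ 1/2 then bconv τ p1 else 1 - bconv τ p1 with hσdef
    have hσmem : σ ∈ Set.Ioc (0:ℝ) (1/2) := by
      constructor
      · exact fold_pos hp10 hτb.1 hτb.2
      · exact (fold_mem (by linarith [hτb.1]) (by linarith [hτb.2])).2
    set s : U → ℝ := fun u =>
      if bconv (γ u) p1 ≤ 1/2 then bconv (γ u) p1 else 1 - bconv (γ u) p1 with hsdef
    have hsmem : ∀ u, s u ∈ Set.Icc (0:ℝ) (1/2) := by
      intro u
      have := bconv_mem ⟨hγ0 u, hγ1 u⟩ ⟨hp10, hp12⟩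
      exact fold_mem (by linarith [this.1]) (by linarith [this.2])
    have hsconv : ∀ u, binEntropy (bconv (s u) pt2) = binEntropy (bconv (γ u) p2) := by
      intro u
      rw [hsdef]
      simp only
      rw [fold_conv, bconv_assoc, ← hp2def]
    have hσconv : binEntropy (bconv σ pt2) = binEntropy (bconv τ p2) := by
      rw [hσdef, fold_conv, bconv_assoc, ← hp2def]
    have hmgl := mgl P s ⟨hpt20, hpt22⟩ hσmem hPnn hP1 hsmem
      (by rw [hσconv, hτeq', Finset.sum_congr rfl (fun u _ => by rw [hsconv u])])
    have hσent : binEntropy σ = binEntropy (bconv τ p1) := by rw [hσdef, fold_ent]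
    have hsent : ∀ u, binEntropy (s u) = binEntropy (bconv (γ u) p1) := by
      intro u; rw [hsdef]; simp only; rw [fold_ent]
    rw [hσent, Finset.sum_congr rfl (fun u _ => by rw [hsent u])] at hmgl
    -- now translate to condMI
    rw [hW1, condMI_eval j hjnn hp10 (by linarith)]
    simp only [binEnt_eq]
    show ∑ u, P u * (Real.binEntropy (bconv (γ u) p1) - Real.binEntropy p1)
        ≤ Real.binEntropy (bconv τ p1) - Real.binEntropy p1
    have expand : ∑ u, P u * (Real.binEntropy (bconv (γ u) p1) - Real.binEntropy p1)
        = (∑ u, P u * Real.binEntropy (bconv (γ u) p1)) - Real.binEntropy p1 := by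
      rw [Finset.sum_congr rfl (fun u (_ : u ∈ Finset.univ) =>
        mul_sub (P u) (Real.binEntropy (bconv (γ u) p1)) (Real.binEntropy p1)),
        Finset.sum_sub_distrib, ← Finset.sum_mul, hP1, one_mul]
    rw [expand]
    linarith [hmgl]
  · -- second inequality
    rw [hW2, miUY_eval j hjnn hjsum hp20 (by linarith)]
    simp only [binEnt_eq]
    rw [hα]
    have hBeq : B = ∑ u, (∑ x, j u x) * Real.binEntropy (bconv (j u 1 / ∑ x, j u x) p2) := rfl
    linarith [hτeq', hBeq.le, hBeq.ge]
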